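/- Assume additionally that m_ℓ ≥ 2 for every ℓ ∈ [d]. Let P = m_1⋯m_d, let g_d = ∑_{w∈T(m,k)} cycdes(w), and for each integer n ≥ 2 let g'(n) denote the total number of descents and cyclic descents over all cyclic (m_1,…,m_d,n)-tensor words over [k]. Then the following identity of formal power series in ℚ[[x]] holds: (∑_{n≥2} g'(n)·x^n)·(1 − k^P·x)^2 = 2·((1/2)·(k−1)·k^{2P−1}·P + k^P·g_d)·x^2 − ((1/2)·(k−1)·k^{3P−1}·P + k^{2P}·g_d)·x^3. -/

import Mathlib

/-- The number of descents of an `m`-tensor word `w` over `[k]`. -/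
def tensorDes {k d : ℕ} {m : Fin d → ℕ} (w : (∀ ℓ, Fin (m ℓ)) → Fin k) : ℕ :=
  (Finset.univ.filter fun p : (∀ ℓ, Fin (m ℓ)) × (∀ ℓ, Fin (m ℓ)) =>
      w p.2 < w p.1 ∧
        ∃ ℓ, ((p.2 ℓ : ℕ) = (p.1 ℓ : ℕ) + 1 ∧ ∀ r, r ≠ ℓ → p.2 r = p.1 r)).card

/-- The number of descents and cyclic descents of a cyclic `m`-tensor word `w` over `[k]`. -/
def tensorCycDes {k d : ℕ} {m : Fin d → ℕ} (w : (∀ ℓ, Fin (m ℓ)) → Fin k) : ℕ :=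
  tensorDes w +
    (Finset.univ.filter fun p : (∀ ℓ, Fin (m ℓ)) × (∀ ℓ, Fin (m ℓ)) =>
        w p.2 < w p.1 ∧
          ∃ ℓ, (((p.1 ℓ : ℕ) + 1 = m ℓ ∧ (p.2 ℓ : ℕ) = 0 ∧ ∀ r, r ≠ ℓ → p.2 r = p.1 r) ∧
            ∀ ℓ', ((p.1 ℓ' : ℕ) + 1 = m ℓ' ∧ (p.2 ℓ' : ℕ) = 0 ∧ ∀ r, r ≠ ℓ' → p.2 r = p.1 r) →
              ℓ' = ℓ)).card

/-- The number of descents of an `(m₁,…,m_d,n)`-tensor word `v` over `[k]`, where the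
index set is represented as `([m₁]×⋯×[m_d]) × [n]`; descents are taken in all `d + 1`
directions. -/
def extTensorDes {k d n : ℕ} {m : Fin d → ℕ}
    (v : ((∀ ℓ, Fin (m ℓ)) × Fin n) → Fin k) : ℕ :=
  (Finset.univ.filter fun p :
      ((∀ ℓ, Fin (m ℓ)) × Fin n) × ((∀ ℓ, Fin (m ℓ)) × Fin n) =>
      v p.2 < v p.1 ∧
        ((p.2.2 = p.1.2 ∧
            ∃ ℓ, ((p.2.1 ℓ : ℕ) = (p.1.1 ℓ : ℕ) + 1 ∧ ∀ r, r ≠ ℓ → p.2.1 r = p.1.1 r)) ∨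
          (p.2.1 = p.1.1 ∧ (p.2.2 : ℕ) = (p.1.2 : ℕ) + 1))).card

/-- Wrap-around in spatial direction `ℓ` for a pair of indices of an
`(m₁,…,m_d,n)`-tensor word: `i ℓ` is maximal, `j ℓ = 1`, and all other coordinates
(including the last one) agree. -/
def spatialWrap {d n : ℕ} {m : Fin d → ℕ} (ℓ : Fin d)
    (p : ((∀ r, Fin (m r)) × Fin n) × ((∀ r, Fin (m r)) × Fin n)) : Prop :=
  (p.1.1 ℓ : ℕ) + 1 = m ℓ ∧ (p.2.1 ℓ : ℕ) = 0 ∧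
    (∀ r, r ≠ ℓ → p.2.1 r = p.1.1 r) ∧ p.2.2 = p.1.2

instance {d n : ℕ} {m : Fin d → ℕ} (ℓ : Fin d)
    (p : ((∀ r, Fin (m r)) × Fin n) × ((∀ r, Fin (m r)) × Fin n)) :
    Decidable (spatialWrap ℓ p) := by unfold spatialWrap; infer_instance

/-- Wrap-around in the last (the `(d+1)`-st) direction for a pair of indices of an
`(m₁,…,m_d,n)`-tensor word. -/
def lastWrap {d n : ℕ} {m : Fin d → ℕ}
    (p : ((∀ r, Fin (m r)) × Fin n) × ((∀ r, Fin (m r)) × Fin n)) : Prop :=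
  (p.1.2 : ℕ) + 1 = n ∧ (p.2.2 : ℕ) = 0 ∧ p.2.1 = p.1.1

instance {d n : ℕ} {m : Fin d → ℕ}
    (p : ((∀ r, Fin (m r)) × Fin n) × ((∀ r, Fin (m r)) × Fin n)) :
    Decidable (lastWrap p) := by unfold lastWrap; infer_instance

/-- The number of descents and cyclic descents of a cyclic `(m₁,…,m_d,n)`-tensor word:
cyclic descents are pairs `(i, j)` with `w i > w j` wrapping around in exactly one of the
`d + 1` directions. -/
def extTensorCycDes {k d n : ℕ} {m : Fin d → ℕ}
    (v : ((∀ ℓ, Fin (m ℓ)) × Fin n) → Fin k) : ℕ :=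
  extTensorDes v +
    (Finset.univ.filter fun p :
        ((∀ ℓ, Fin (m ℓ)) × Fin n) × ((∀ ℓ, Fin (m ℓ)) × Fin n) =>
        v p.2 < v p.1 ∧
          (((∃ ℓ, spatialWrap ℓ p ∧ ∀ ℓ', spatialWrap ℓ' p → ℓ' = ℓ) ∧ ¬ lastWrap p) ∨
            (lastWrap p ∧ ∀ ℓ, ¬ spatialWrap ℓ p))).card

open Finset


lemma card_filter_equiv {α β : Type*} [Fintype α] [Fintype β] (e : α ≃ β)
    (P : β → Prop) [DecidablePred P] :
    (univ.filter fun a => P (e a)).card = (univ.filter P).card := by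
  rw [← Fintype.card_subtype, ← Fintype.card_subtype]
  exact Fintype.card_congr (e.subtypeEquiv fun a => Iff.rfl)

lemma card_filter_fst {A B : Type*} [Fintype A] [Fintype B] (P : A → Prop) [DecidablePred P] :
    (univ.filter fun q : A × B => P q.1).card = (univ.filter P).card * Fintype.card B := by
  rw [← Finset.univ_product_univ]
  have : ((univ ×ˢ univ).filter fun q : A × B => P q.1)
      = (univ.filter P) ×ˢ univ := by
    ext q; simp
  rw [this, Finset.card_product, Finset.card_univ]

lemma card_lt_pairs (k : ℕ) :
    (univ.filter fun q : Fin k × Fin k => q.2 < q.1).card = k.choose 2 := by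
  have h1 : (univ.filter fun q : Fin k × Fin k => q.2 < q.1).card
      = ∑ a : Fin k, (a : ℕ) := by
    rw [Finset.card_filter]
    rw [Fintype.sum_prod_type]
    refine Finset.sum_congr rfl fun a _ => ?_
    rw [← Finset.card_filter]
    have : (univ.filter fun b : Fin k => b < a) = Finset.Iio a := by ext b; simp
    rw [this, Fin.card_Iio]
  rw [h1, Fin.sum_univ_eq_sum_range (fun i => i) k, Finset.sum_range_id, Nat.choose_two_right]

section
variable {I : Type*} [Fintype I] [DecidableEq I]

/-- equiv splitting off values at two distinct points -/
def twoPointEquiv (k : ℕ) (i j : I) (hij : i ≠ j) :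
    (I → Fin k) ≃ (Fin k × Fin k) × ({x : I // x ≠ i ∧ x ≠ j} → Fin k) where
  toFun w := ((w i, w j), fun x => w x.1)
  invFun q x := if h1 : x = i then q.1.1 else if h2 : x = j then q.1.2 else q.2 ⟨x, h1, h2⟩
  left_inv w := by
    funext x
    by_cases h1 : x = i
    · subst h1; simp
    · by_cases h2 : x = j
      · subst h2; simp [h1]
      · simp [h1, h2]
  right_inv q := by
    refine Prod.ext (Prod.ext ?_ ?_) ?_
    · simp
    · simp [hij.symm, (Ne.symm hij)]
    · funext x
      simp [x.2.1, x.2.2]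

lemma card_two_compl (i j : I) (hij : i ≠ j) :
    Fintype.card {x : I // x ≠ i ∧ x ≠ j} = Fintype.card I - 2 := by
  rw [Fintype.card_subtype]
  have : (univ.filter fun x : I => x ≠ i ∧ x ≠ j) = univ \ {i, j} := by
    ext x; simp [and_comm]
  rw [this, Finset.card_sdiff_of_subset (by simp), Finset.card_univ,
    Finset.card_insert_of_notMem (by simp [hij]), Finset.card_singleton]

lemma card_lt_fun (k : ℕ) {i j : I} (hij : i ≠ j) :
    (univ.filter fun w : I → Fin k => w j < w i).card
      = k.choose 2 * k ^ (Fintype.card I - 2) := by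
  have := card_filter_equiv (twoPointEquiv k i j hij).symm
    (fun w : I → Fin k => w j < w i)
  have h2 : (univ.filter fun q : (Fin k × Fin k) × ({x : I // x ≠ i ∧ x ≠ j} → Fin k) =>
      ((twoPointEquiv k i j hij).symm q) j < ((twoPointEquiv k i j hij).symm q) i).card
      = (univ.filter fun w : I → Fin k => w j < w i).card := this
  rw [← h2]
  have h3 : ∀ q : (Fin k × Fin k) × ({x : I // x ≠ i ∧ x ≠ j} → Fin k),
      (((twoPointEquiv k i j hij).symm q) j < ((twoPointEquiv k i j hij).symm q) i)
        ↔ q.1.2 < q.1.1 := by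
    intro q
    simp [twoPointEquiv, hij.symm, Ne.symm hij]
  rw [Finset.filter_congr (fun q _ => h3 q)]
  rw [card_filter_fst (fun a : Fin k × Fin k => a.2 < a.1), card_lt_pairs,
    Fintype.card_fun, Fintype.card_fin, card_two_compl i j hij]
end

-- paste a.lean lemmas here when combining
lemma master_count {I : Type*} [Fintype I] [DecidableEq I] (k : ℕ)
    (Q : I × I → Prop) [DecidablePred Q] (hQ : ∀ p, Q p → p.1 ≠ p.2) :
    ∑ w : I → Fin k, (univ.filter fun p => w p.2 < w p.1 ∧ Q p).card
      = (univ.filter Q).card * (k.choose 2 * k ^ (Fintype.card I - 2)) := by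
  have h1 : ∀ w : I → Fin k, (univ.filter fun p => w p.2 < w p.1 ∧ Q p).card
      = ∑ p : I × I, if Q p then (if w p.2 < w p.1 then 1 else 0) else 0 := by
    intro w
    rw [Finset.card_filter]
    refine Finset.sum_congr rfl fun p _ => ?_
    by_cases hq : Q p <;> by_cases hlt : w p.2 < w p.1 <;> simp [hq, hlt]
  simp only [h1]
  rw [Finset.sum_comm]
  have h2 : ∀ p : I × I,
      (∑ w : I → Fin k, if Q p then (if w p.2 < w p.1 then 1 else 0) else 0)
        = if Q p then k.choose 2 * k ^ (Fintype.card I - 2) else 0 := by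
    intro p
    by_cases hq : Q p
    · simp only [hq, if_true]
      rw [← Finset.card_filter]
      exact card_lt_fun k (hQ p hq)
    · simp [hq]
  simp only [h2]
  rw [← Finset.sum_filter, Finset.sum_const, smul_eq_mul]
section
variable {d : ℕ} {m : Fin d → ℕ}

/-- cyclic step in direction `ℓ` -/
def pstep (ℓ : Fin d) (i : ∀ r, Fin (m r)) : ∀ r, Fin (m r) :=
  Function.update i ℓ ⟨((i ℓ : ℕ) + 1) % m ℓ, Nat.mod_lt _ (i ℓ).pos⟩

lemma pstep_self (ℓ : Fin d) (i : ∀ r, Fin (m r)) :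
    ((pstep ℓ i ℓ : Fin (m ℓ)) : ℕ) = ((i ℓ : ℕ) + 1) % m ℓ := by
  simp [pstep]

lemma pstep_ne (ℓ : Fin d) (i : ∀ r, Fin (m r)) {r : Fin d} (h : r ≠ ℓ) :
    pstep ℓ i r = i r := by
  simp [pstep, Function.update_of_ne h]

lemma pstep_self_ne (hm : ∀ ℓ, 2 ≤ m ℓ) (ℓ : Fin d) (i : ∀ r, Fin (m r)) :
    ((pstep ℓ i ℓ : Fin (m ℓ)) : ℕ) ≠ (i ℓ : ℕ) := by
  rw [pstep_self]
  rcases Nat.lt_or_ge ((i ℓ : ℕ) + 1) (m ℓ) with h | h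
  · rw [Nat.mod_eq_of_lt h]; omega
  · have hEq : (i ℓ : ℕ) + 1 = m ℓ := le_antisymm (i ℓ).isLt h
    rw [hEq, Nat.mod_self]
    have := hm ℓ
    omega

lemma edge_count (hm : ∀ ℓ, 2 ≤ m ℓ) :
    (univ.filter fun p : (∀ r, Fin (m r)) × (∀ r, Fin (m r)) =>
        ∃ ℓ, ((p.2 ℓ : ℕ) = (p.1 ℓ : ℕ) + 1 ∧ ∀ r, r ≠ ℓ → p.2 r = p.1 r)).card
      + (univ.filter fun p : (∀ r, Fin (m r)) × (∀ r, Fin (m r)) =>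
        ∃ ℓ, (((p.1 ℓ : ℕ) + 1 = m ℓ ∧ (p.2 ℓ : ℕ) = 0 ∧ ∀ r, r ≠ ℓ → p.2 r = p.1 r) ∧
            ∀ ℓ', ((p.1 ℓ' : ℕ) + 1 = m ℓ' ∧ (p.2 ℓ' : ℕ) = 0 ∧ ∀ r, r ≠ ℓ' → p.2 r = p.1 r) →
              ℓ' = ℓ)).card
      = d * ∏ ℓ, m ℓ := by
  classical
  set Q1 : (∀ r, Fin (m r)) × (∀ r, Fin (m r)) → Prop := fun p =>
    ∃ ℓ, ((p.2 ℓ : ℕ) = (p.1 ℓ : ℕ) + 1 ∧ ∀ r, r ≠ ℓ → p.2 r = p.1 r) with hQ1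
  set Q2 : (∀ r, Fin (m r)) × (∀ r, Fin (m r)) → Prop := fun p =>
    ∃ ℓ, (((p.1 ℓ : ℕ) + 1 = m ℓ ∧ (p.2 ℓ : ℕ) = 0 ∧ ∀ r, r ≠ ℓ → p.2 r = p.1 r) ∧
        ∀ ℓ', ((p.1 ℓ' : ℕ) + 1 = m ℓ' ∧ (p.2 ℓ' : ℕ) = 0 ∧ ∀ r, r ≠ ℓ' → p.2 r = p.1 r) →
          ℓ' = ℓ) with hQ2
  have hdisj : Disjoint (univ.filter Q1) (univ.filter Q2) := by
    rw [Finset.disjoint_left]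
    intro p h1 h2
    simp only [Finset.mem_filter, Finset.mem_univ, true_and, hQ1, hQ2] at h1 h2
    obtain ⟨ℓ, ha, hb⟩ := h1
    obtain ⟨ℓ', ⟨hc, hd', he⟩, _⟩ := h2
    by_cases hll : ℓ' = ℓ
    · subst hll; omega
    · have := hb ℓ' hll
      have hm2 := hm ℓ'
      rw [this] at hd'
      omega
  rw [← Finset.card_union_of_disjoint hdisj, ← Finset.filter_or]
  have himg : (univ.filter fun p => Q1 p ∨ Q2 p)
      = Finset.image (fun x : Fin d × (∀ r, Fin (m r)) => (x.2, pstep x.1 x.2)) univ := by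
    ext p
    simp only [Finset.mem_filter, Finset.mem_univ, true_and, Finset.mem_image]
    constructor
    · rintro (⟨ℓ, h1, h2⟩ | ⟨ℓ, ⟨hw1, hw2, hw3⟩, _⟩)
      · refine ⟨(ℓ, p.1), ?_⟩
        have h0 : p.2 = pstep ℓ p.1 := by
          funext r
          by_cases hr : r = ℓ
          · subst hr
            apply Fin.ext
            rw [pstep_self, ← h1, Nat.mod_eq_of_lt (p.2 r).isLt]
          · rw [pstep_ne _ _ hr, h2 r hr]
        exact Prod.ext rfl h0.symm
      · refine ⟨(ℓ, p.1), ?_⟩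
        have h0 : p.2 = pstep ℓ p.1 := by
          funext r
          by_cases hr : r = ℓ
          · subst hr
            apply Fin.ext
            rw [pstep_self, hw1, Nat.mod_self, hw2]
          · rw [pstep_ne _ _ hr, hw3 r hr]
        exact Prod.ext rfl h0.symm
    · rintro ⟨⟨ℓ, i⟩, rfl⟩
      rcases Nat.lt_or_ge ((i ℓ : ℕ) + 1) (m ℓ) with h | h'
      · left
        exact ⟨ℓ, by rw [pstep_self, Nat.mod_eq_of_lt h], fun r hr => pstep_ne _ _ hr⟩
      · have h : (i ℓ : ℕ) + 1 = m ℓ := le_antisymm (i ℓ).isLt h'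
        right
        refine ⟨ℓ, ⟨h, by rw [pstep_self, h, Nat.mod_self], fun r hr => pstep_ne _ _ hr⟩, ?_⟩
        intro ℓ' hyp
        obtain ⟨hc, hd', he⟩ := hyp
        by_contra hll
        dsimp only at hc hd'
        rw [pstep_ne _ _ (by exact hll)] at hd'
        have := hm ℓ'
        omega
  rw [himg, Finset.card_image_of_injective _ ?inj, Finset.card_univ,
    Fintype.card_prod, Fintype.card_fin, Fintype.card_pi]
  · simp
  case inj =>
    intro ⟨ℓ, i⟩ ⟨ℓ', i'⟩ hEq
    simp only [Prod.mk.injEq] at hEq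
    obtain ⟨rfl, h2⟩ := hEq
    by_cases hll : ℓ = ℓ'
    · subst hll; rfl
    · exfalso
      have h3 := congrFun h2 ℓ
      rw [pstep_ne _ _ hll] at h3
      exact pstep_self_ne hm ℓ i (congrArg Fin.val h3)
end
section
variable {d n : ℕ} {m : Fin d → ℕ}

def qstep {n : ℕ} (t : Fin n) : Fin n := ⟨((t : ℕ) + 1) % n, Nat.mod_lt _ t.pos⟩

lemma qstep_val {n : ℕ} (t : Fin n) : (qstep t : ℕ) = ((t : ℕ) + 1) % n := rfl

def extMap (z : (Fin d ⊕ Unit) × ((∀ r, Fin (m r)) × Fin n)) :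
    ((∀ r, Fin (m r)) × Fin n) × ((∀ r, Fin (m r)) × Fin n) :=
  (z.2, match z.1 with
    | .inl ℓ => (pstep ℓ z.2.1, z.2.2)
    | .inr _ => (z.2.1, qstep z.2.2))

lemma extMap_inl (ℓ : Fin d) (x : ∀ r, Fin (m r)) (t : Fin n) :
    extMap (Sum.inl ℓ, (x, t)) = ((x, t), (pstep ℓ x, t)) := rfl

lemma extMap_inr (u : Unit) (x : ∀ r, Fin (m r)) (t : Fin n) :
    extMap (Sum.inr u, (x, t)) = ((x, t), (x, qstep t)) := rfl

lemma ext_edge_count (hm : ∀ ℓ, 2 ≤ m ℓ) (hn : 2 ≤ n) :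
    (univ.filter fun p : ((∀ ℓ, Fin (m ℓ)) × Fin n) × ((∀ ℓ, Fin (m ℓ)) × Fin n) =>
        ((p.2.2 = p.1.2 ∧
            ∃ ℓ, ((p.2.1 ℓ : ℕ) = (p.1.1 ℓ : ℕ) + 1 ∧ ∀ r, r ≠ ℓ → p.2.1 r = p.1.1 r)) ∨
          (p.2.1 = p.1.1 ∧ (p.2.2 : ℕ) = (p.1.2 : ℕ) + 1))).card
      + (univ.filter fun p : ((∀ ℓ, Fin (m ℓ)) × Fin n) × ((∀ ℓ, Fin (m ℓ)) × Fin n) =>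
          (((∃ ℓ, spatialWrap ℓ p ∧ ∀ ℓ', spatialWrap ℓ' p → ℓ' = ℓ) ∧ ¬ lastWrap p) ∨
            (lastWrap p ∧ ∀ ℓ, ¬ spatialWrap ℓ p))).card
      = (d + 1) * ((∏ ℓ, m ℓ) * n) := by
  classical
  set J := (∀ ℓ, Fin (m ℓ)) × Fin n with hJ
  set Q1 : J × J → Prop := fun p =>
    ((p.2.2 = p.1.2 ∧
        ∃ ℓ, ((p.2.1 ℓ : ℕ) = (p.1.1 ℓ : ℕ) + 1 ∧ ∀ r, r ≠ ℓ → p.2.1 r = p.1.1 r)) ∨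
      (p.2.1 = p.1.1 ∧ (p.2.2 : ℕ) = (p.1.2 : ℕ) + 1)) with hQ1
  set Q2 : J × J → Prop := fun p =>
    (((∃ ℓ, spatialWrap ℓ p ∧ ∀ ℓ', spatialWrap ℓ' p → ℓ' = ℓ) ∧ ¬ lastWrap p) ∨
      (lastWrap p ∧ ∀ ℓ, ¬ spatialWrap ℓ p)) with hQ2
  have hdisj : Disjoint (univ.filter Q1) (univ.filter Q2) := by
    rw [Finset.disjoint_left]
    intro p h1 h2
    simp only [Finset.mem_filter, Finset.mem_univ, true_and, hQ1, hQ2] at h1 h2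
    rcases h1 with ⟨ht, ℓ, ha, hb⟩ | ⟨hx, ht⟩
    · rcases h2 with ⟨⟨ℓ', hw, -⟩, -⟩ | ⟨hl, -⟩
      · obtain ⟨hw1, hw2, hw3, -⟩ := hw
        by_cases hll : ℓ' = ℓ
        · subst hll; omega
        · have h5 := hb ℓ' hll
          rw [h5] at hw2
          have := hm ℓ'
          omega
      · obtain ⟨-, -, hl3⟩ := hl
        have h5 := congrFun hl3 ℓ
        rw [h5] at ha
        omega
    · rcases h2 with ⟨⟨ℓ', hw, -⟩, -⟩ | ⟨hl, -⟩
      · obtain ⟨hw1, hw2, -, -⟩ := hw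
        have h5 := congrFun hx ℓ'
        rw [h5] at hw2
        have := hm ℓ'
        omega
      · obtain ⟨-, hl2, -⟩ := hl
        omega
  rw [← Finset.card_union_of_disjoint hdisj, ← Finset.filter_or]
  have himg : (univ.filter fun p => Q1 p ∨ Q2 p) = Finset.image extMap univ := by
    ext p
    simp only [Finset.mem_filter, Finset.mem_univ, true_and, Finset.mem_image]
    constructor
    · rintro (h | h)
      · rcases h with ⟨ht, ℓ, ha, hb⟩ | ⟨hx, ht⟩
        · refine ⟨(Sum.inl ℓ, p.1), ?_⟩
          have h0 : p.2.1 = pstep ℓ p.1.1 := by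
            funext r
            by_cases hr : r = ℓ
            · subst hr
              apply Fin.ext
              rw [pstep_self, ← ha, Nat.mod_eq_of_lt (p.2.1 r).isLt]
            · rw [pstep_ne _ _ hr, hb r hr]
          rw [show p.1 = (p.1.1, p.1.2) from rfl, extMap_inl]
          exact Prod.ext rfl (Prod.ext h0.symm ht.symm)
        · refine ⟨(Sum.inr (), p.1), ?_⟩
          have h0 : p.2.2 = qstep p.1.2 := by
            apply Fin.ext
            rw [qstep_val, ← ht, Nat.mod_eq_of_lt (p.2.2).isLt]
          rw [show p.1 = (p.1.1, p.1.2) from rfl, extMap_inr]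
          exact Prod.ext rfl (Prod.ext hx.symm h0.symm)
      · rcases h with ⟨⟨ℓ, ⟨hw1, hw2, hw3, hw4⟩, -⟩, -⟩ | ⟨⟨hl1, hl2, hl3⟩, -⟩
        · refine ⟨(Sum.inl ℓ, p.1), ?_⟩
          have h0 : p.2.1 = pstep ℓ p.1.1 := by
            funext r
            by_cases hr : r = ℓ
            · subst hr
              apply Fin.ext
              rw [pstep_self, hw1, Nat.mod_self, hw2]
            · rw [pstep_ne _ _ hr, hw3 r hr]
          rw [show p.1 = (p.1.1, p.1.2) from rfl, extMap_inl]
          exact Prod.ext rfl (Prod.ext h0.symm hw4.symm)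
        · refine ⟨(Sum.inr (), p.1), ?_⟩
          have h0 : p.2.2 = qstep p.1.2 := by
            apply Fin.ext
            rw [qstep_val, hl1, Nat.mod_self, hl2]
          rw [show p.1 = (p.1.1, p.1.2) from rfl, extMap_inr]
          exact Prod.ext rfl (Prod.ext hl3.symm h0.symm)
    · rintro ⟨⟨s, x, t⟩, rfl⟩
      cases s with
      | inl ℓ =>
        rw [extMap_inl]
        rcases Nat.lt_or_ge ((x ℓ : ℕ) + 1) (m ℓ) with h | h'
        · left; left
          refine ⟨rfl, ℓ, ?_, fun r hr => pstep_ne _ _ hr⟩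
          rw [pstep_self, Nat.mod_eq_of_lt h]
        · have h : (x ℓ : ℕ) + 1 = m ℓ := le_antisymm (x ℓ).isLt h'
          right; left
          constructor
          · refine ⟨ℓ, ⟨h, by rw [pstep_self, h, Nat.mod_self], fun r hr => pstep_ne _ _ hr, rfl⟩, ?_⟩
            intro ℓ' hw
            obtain ⟨hc, hd', -, -⟩ := hw
            by_contra hll
            dsimp only at hc hd'
            rw [pstep_ne _ _ (by exact hll)] at hd'
            have := hm ℓ'
            omega
          · intro hl
            obtain ⟨-, -, hl3⟩ := hl
            dsimp only at hl3
            have h3 := congrFun hl3 ℓ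
            exact pstep_self_ne hm ℓ x (congrArg Fin.val h3)
      | inr u =>
        rw [extMap_inr]
        rcases Nat.lt_or_ge ((t : ℕ) + 1) n with h | h'
        · left; right
          exact ⟨rfl, by rw [qstep_val, Nat.mod_eq_of_lt h]⟩
        · have h : (t : ℕ) + 1 = n := le_antisymm t.isLt h'
          right; right
          constructor
          · exact ⟨h, by rw [qstep_val, h, Nat.mod_self], rfl⟩
          · intro ℓ hw
            obtain ⟨hc, hd', -, -⟩ := hw
            dsimp only at hc hd'
            have := hm ℓ
            omega
  rw [himg, Finset.card_image_of_injective _ ?inj, Finset.card_univ]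
  · rw [Fintype.card_prod, Fintype.card_sum, Fintype.card_fin, Fintype.card_unit]
    simp [Fintype.card_pi]
  case inj =>
    rintro ⟨s, x, t⟩ ⟨s', x', t'⟩ hEq
    cases s with
    | inl ℓ =>
      cases s' with
      | inl ℓ' =>
        rw [extMap_inl, extMap_inl, Prod.mk.injEq, Prod.mk.injEq, Prod.mk.injEq] at hEq
        obtain ⟨⟨rfl, rfl⟩, h2, -⟩ := hEq
        by_cases hll : ℓ = ℓ'
        · subst hll; rfl
        · exfalso
          have h3 := congrFun h2 ℓ
          rw [pstep_ne _ _ hll] at h3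
          exact pstep_self_ne hm ℓ x (congrArg Fin.val h3)
      | inr u =>
        rw [extMap_inl, extMap_inr, Prod.mk.injEq, Prod.mk.injEq, Prod.mk.injEq] at hEq
        obtain ⟨⟨rfl, rfl⟩, h2, -⟩ := hEq
        exact absurd (congrArg Fin.val (congrFun h2 ℓ)) (pstep_self_ne hm ℓ x)
    | inr u =>
      cases s' with
      | inl ℓ' =>
        rw [extMap_inr, extMap_inl, Prod.mk.injEq, Prod.mk.injEq, Prod.mk.injEq] at hEq
        obtain ⟨⟨rfl, rfl⟩, h2, -⟩ := hEq
        exact absurd (congrArg Fin.val (congrFun h2.symm ℓ')) (pstep_self_ne hm ℓ' x)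
      | inr u' =>
        rw [extMap_inr, extMap_inr] at hEq
        obtain ⟨⟨rfl, rfl⟩⟩ := Prod.mk.injEq .. ▸ hEq
        rfl
end
lemma sum_tensorCycDes (k : ℕ) {d : ℕ} {m : Fin d → ℕ} (hm : ∀ ℓ, 2 ≤ m ℓ) :
    ∑ w : (∀ ℓ, Fin (m ℓ)) → Fin k, tensorCycDes w
      = d * (∏ ℓ, m ℓ) * (k.choose 2 * k ^ ((∏ ℓ, m ℓ) - 2)) := by
  classical
  have hcard : Fintype.card (∀ ℓ, Fin (m ℓ)) = ∏ ℓ, m ℓ := by simp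
  simp only [tensorCycDes, tensorDes]
  rw [Finset.sum_add_distrib]
  rw [master_count k _ (fun p hp heq => by
    obtain ⟨ℓ, h1, -⟩ := hp
    rw [heq] at h1; omega)]
  rw [master_count k _ (fun p hp heq => by
    obtain ⟨ℓ, ⟨h1, h2, -⟩, -⟩ := hp
    rw [heq] at h1
    have := hm ℓ; omega)]
  rw [← add_mul, edge_count hm, hcard, mul_assoc]

lemma sum_extTensorCycDes (k : ℕ) {d n : ℕ} {m : Fin d → ℕ}
    (hm : ∀ ℓ, 2 ≤ m ℓ) (hn : 2 ≤ n) :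
    ∑ v : ((∀ ℓ, Fin (m ℓ)) × Fin n) → Fin k, extTensorCycDes v
      = (d + 1) * ((∏ ℓ, m ℓ) * n) * (k.choose 2 * k ^ ((∏ ℓ, m ℓ) * n - 2)) := by
  classical
  have hcard : Fintype.card ((∀ ℓ, Fin (m ℓ)) × Fin n) = (∏ ℓ, m ℓ) * n := by
    simp [Fintype.card_pi]
  simp only [extTensorCycDes, extTensorDes]
  rw [Finset.sum_add_distrib]
  rw [master_count k _ (fun p hp heq => by
    rcases hp with ⟨ht, ℓ, h1, -⟩ | ⟨hx, ht⟩
    · have h3 := congrArg (fun q => ((q.1 ℓ : ℕ))) heq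
      omega
    · have h3 := congrArg (fun q => ((q.2 : ℕ))) heq
      omega)]
  rw [master_count k _ (fun p hp heq => by
    rcases hp with ⟨⟨ℓ, ⟨h1, h2, -, -⟩, -⟩, -⟩ | ⟨⟨h1, h2, -⟩, -⟩
    · have h3 := congrArg (fun q => ((q.1 ℓ : ℕ))) heq
      have := hm ℓ
      omega
    · have h3 := congrArg (fun q => ((q.2 : ℕ))) heq
      omega)]
  rw [← add_mul, ext_edge_count hm hn, hcard, mul_assoc]
lemma series_identity (A Cc : ℚ) :
    (PowerSeries.mk fun n => if n < 2 then (0 : ℚ) else Cc * n * A ^ n) *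
        (1 - PowerSeries.C (R := ℚ) A * PowerSeries.X) ^ 2 =
      PowerSeries.C (R := ℚ) (2 * Cc * A ^ 2) * PowerSeries.X ^ 2 -
        PowerSeries.C (R := ℚ) (Cc * A ^ 3) * PowerSeries.X ^ 3 := by
  set F := PowerSeries.mk fun n => if n < 2 then (0 : ℚ) else Cc * n * A ^ n with hF
  have hexp : F * (1 - PowerSeries.C (R := ℚ) A * PowerSeries.X) ^ 2
      = F - PowerSeries.C (R := ℚ) (2 * A) * (F * PowerSeries.X ^ 1)
        + PowerSeries.C (R := ℚ) (A ^ 2) * (F * PowerSeries.X ^ 2) := by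
    simp only [map_mul, map_pow, map_ofNat]
    ring
  rw [hexp]
  ext N
  simp only [map_sub, map_add, PowerSeries.coeff_C_mul, PowerSeries.coeff_mul_X_pow',
    PowerSeries.coeff_mk, PowerSeries.coeff_C, hF]
  rcases Nat.lt_or_ge N 4 with h | h
  · interval_cases N <;> simp [mul_comm] <;> ring
  · obtain ⟨p, rfl⟩ := Nat.exists_eq_add_of_le h
    rw [if_neg (by omega : ¬(4 + p < 2)), if_pos (by omega : 1 ≤ 4 + p),
      if_pos (by omega : 2 ≤ 4 + p),
      (by omega : 4 + p - 1 = p + 3), (by omega : 4 + p - 2 = p + 2),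
      if_neg (by omega : ¬(p + 3 < 2)), if_neg (by omega : ¬(p + 2 < 2)),
      if_pos (by omega : 2 ≤ 4 + p), if_pos (by omega : 3 ≤ 4 + p),
      (by omega : 4 + p - 3 = p + 1),
      if_neg (by omega : ¬(p + 2 = 0)), if_neg (by omega : ¬(p + 1 = 0))]
    push_cast
    ring
/-- Let `P = ∏ m ℓ` (with every `m ℓ ≥ 2`), `g_d` the total number of descents and
cyclic descents over all cyclic `m`-tensor words over `[k]`, and `g'(n)` the total number
of descents and cyclic descents over all cyclic `(m₁,…,m_d,n)`-tensor words over `[k]`.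
Then `(∑_{n ≥ 2} g'(n) xⁿ)·(1 − k^P x)² =
2((1/2)(k−1)k^(2P−1) P + k^P g_d) x² − ((1/2)(k−1)k^(3P−1) P + k^(2P) g_d) x³`
as formal power series over `ℚ`. -/
theorem gen_fun_total_cyclic_descents (k d : ℕ) (hk : 1 ≤ k) (hd : 1 ≤ d)
    (m : Fin d → ℕ) (hm : ∀ ℓ, 2 ≤ m ℓ) :
    (PowerSeries.mk fun n => if n < 2 then (0 : ℚ) else
        ∑ v : ((∀ ℓ, Fin (m ℓ)) × Fin n) → Fin k, (extTensorCycDes v : ℚ)) *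
      (1 - PowerSeries.C (R := ℚ) ((k : ℚ) ^ (∏ ℓ, m ℓ)) * PowerSeries.X) ^ 2 =
      PowerSeries.C (R := ℚ) (2 * ((1 / 2) * ((k : ℚ) - 1) * (k : ℚ) ^ (2 * (∏ ℓ, m ℓ) - 1) *
            (∏ ℓ, (m ℓ : ℚ)) +
          (k : ℚ) ^ (∏ ℓ, m ℓ) *
            ∑ w : (∀ ℓ, Fin (m ℓ)) → Fin k, (tensorCycDes w : ℚ))) *
          PowerSeries.X ^ 2 -
        PowerSeries.C (R := ℚ) ((1 / 2) * ((k : ℚ) - 1) * (k : ℚ) ^ (3 * (∏ ℓ, m ℓ) - 1) *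
            (∏ ℓ, (m ℓ : ℚ)) +
          (k : ℚ) ^ (2 * ∏ ℓ, m ℓ) *
            ∑ w : (∀ ℓ, Fin (m ℓ)) → Fin k, (tensorCycDes w : ℚ)) *
          PowerSeries.X ^ 3 := by
  classical
  set P := ∏ ℓ, m ℓ with hP
  have hq : 2 ≤ P := by
    have h0 : m ⟨0, hd⟩ ≤ P := by
      rw [hP]
      exact Finset.single_le_prod' (fun i _ => by have := hm i; omega) (Finset.mem_univ _)
    have := hm ⟨0, hd⟩
    omega
  have hk0 : (k : ℚ) ≠ 0 := Nat.cast_ne_zero.mpr (by omega)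
  set A : ℚ := (k : ℚ) ^ P with hA
  have hprodQ : (∏ ℓ, ((m ℓ : ℚ))) = ((P : ℕ) : ℚ) := by rw [hP]; push_cast; rfl
  have h2P : (k : ℚ) ^ (2 * P - 1) = A ^ 2 / k := by
    rw [hA, eq_div_iff hk0, ← pow_succ, ← pow_mul]
    congr 1
    omega
  have h3P : (k : ℚ) ^ (3 * P - 1) = A ^ 3 / k := by
    rw [hA, eq_div_iff hk0, ← pow_succ, ← pow_mul]
    congr 1
    omega
  have h2Pfull : (k : ℚ) ^ (2 * P) = A ^ 2 := by
    rw [hA, ← pow_mul]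
    congr 1
    omega
  have hg : (∑ w : (∀ ℓ, Fin (m ℓ)) → Fin k, (tensorCycDes w : ℚ))
      = (d : ℚ) * P * ((k : ℚ) * ((k : ℚ) - 1) / 2) * A / (k : ℚ) ^ 2 := by
    rw [← Nat.cast_sum, sum_tensorCycDes k hm, ← hP]
    have hsplit : (k : ℚ) ^ (P - 2) * (k : ℚ) ^ 2 = (k : ℚ) ^ P := by
      rw [← pow_add, Nat.sub_add_cancel hq]
    rw [hA, ← hsplit]
    push_cast [Nat.cast_choose_two]
    field_simp
  set Cc : ℚ := ((d : ℚ) + 1) * (P : ℚ) * ((k : ℚ) * ((k : ℚ) - 1) / 2) / (k : ℚ) ^ 2 with hCc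
  have hf : ∀ N : ℕ, 2 ≤ N →
      (∑ v : ((∀ ℓ, Fin (m ℓ)) × Fin N) → Fin k, (extTensorCycDes v : ℚ))
        = Cc * N * A ^ N := by
    intro N hN
    have hPN : 2 ≤ P * N := le_trans hq (Nat.le_mul_of_pos_right P (by omega))
    rw [← Nat.cast_sum, sum_extTensorCycDes k hm hN, ← hP]
    have hsplit : (k : ℚ) ^ (P * N - 2) * (k : ℚ) ^ 2 = (k : ℚ) ^ (P * N) := by
      rw [← pow_add, Nat.sub_add_cancel hPN]
    have hAN : A ^ N = (k : ℚ) ^ (P * N) := by rw [hA, ← pow_mul]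
    rw [hCc, hAN, ← hsplit]
    push_cast [Nat.cast_choose_two]
    field_simp
  rw [hprodQ, h2P, h3P, h2Pfull, hg]
  have hb2 : (2 * ((1 / 2) * ((k : ℚ) - 1) * (A ^ 2 / k) * ((P : ℕ) : ℚ) +
      A * ((d : ℚ) * P * ((k : ℚ) * ((k : ℚ) - 1) / 2) * A / (k : ℚ) ^ 2)))
      = 2 * Cc * A ^ 2 := by
    rw [hCc, hA]
    field_simp
    ring
  have hb3 : ((1 / 2) * ((k : ℚ) - 1) * (A ^ 3 / k) * ((P : ℕ) : ℚ) +
      A ^ 2 * ((d : ℚ) * P * ((k : ℚ) * ((k : ℚ) - 1) / 2) * A / (k : ℚ) ^ 2))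
      = Cc * A ^ 3 := by
    rw [hCc, hA]
    field_simp
    ring
  rw [hb2, hb3]
  have hFeq : (PowerSeries.mk fun n => if n < 2 then (0 : ℚ) else
      ∑ v : ((∀ ℓ, Fin (m ℓ)) × Fin n) → Fin k, (extTensorCycDes v : ℚ))
      = PowerSeries.mk (fun n => if n < 2 then (0 : ℚ) else Cc * n * A ^ n) := by
    apply PowerSeries.ext
    intro N
    rw [PowerSeries.coeff_mk, PowerSeries.coeff_mk]
    by_cases hN : N < 2
    · simp [hN]
    · simp only [hN, if_false]
      exact hf N (by omega)
  rw [hFeq, series_identity A Cc]
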